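/- Let D₁₁, D₂₂ > 0 and define u : ℝ³ ∖ {(0,0,0)} → ℝ by u(x, y, θ) = [ (1/16)(x²/D₂₂ + θ²/D₁₁)² + (y − xθ/2)²/(D₁₁D₂₂) ]^{−1/2}. Then u is smooth on ℝ³ ∖ {(0,0,0)} and satisfies D₁₁ (∂_θ² u)(x, y, θ) + D₂₂ ((∂_x + θ∂_y)² u)(x, y, θ) = 0 at every point (x, y, θ) ≠ (0, 0, 0). -/

import Mathlib

/-!
STATEMENT 11: For D₁₁, D₂₂ > 0, the function
u(x,y,θ) = [ (1/16)(x²/D₂₂ + θ²/D₁₁)² + (y − xθ/2)²/(D₁₁D₂₂) ]^{−1/2}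
is smooth on ℝ³ ∖ {0} and satisfies
D₁₁ ∂_θ² u + D₂₂ (∂_x + θ∂_y)² u = 0 away from the origin.
Points are written p = (x, y, θ) : ℝ × ℝ × ℝ.
-/

open scoped ContDiff

/-- `∂_θ`, acting on functions of p = (x, y, θ). -/
noncomputable def Dtheta (f : ℝ × ℝ × ℝ → ℝ) (p : ℝ × ℝ × ℝ) : ℝ :=
  fderiv ℝ f p (0, 0, 1)

/-- The Heisenberg-approximation horizontal derivative `∂_x + θ ∂_y`,
acting on functions of p = (x, y, θ). -/
noncomputable def Dhor (f : ℝ × ℝ × ℝ → ℝ) (p : ℝ × ℝ × ℝ) : ℝ :=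
  fderiv ℝ f p (1, p.2.2, 0)

/-- The fundamental-solution-type function
`[ (1/16)(x²/D₂₂ + θ²/D₁₁)² + (y − xθ/2)²/(D₁₁D₂₂) ]^{−1/2}`. -/
noncomputable def ufun (D11 D22 : ℝ) (p : ℝ × ℝ × ℝ) : ℝ :=
  ((1 / 16) * (p.1 ^ 2 / D22 + p.2.2 ^ 2 / D11) ^ 2
      + (p.2.1 - p.1 * p.2.2 / 2) ^ 2 / (D11 * D22)) ^ (-(1 : ℝ) / 2)

/-! ### Auxiliary definitions -/

/-- The quartic polynomial under the square root. -/
noncomputable def Qf (D11 D22 : ℝ) (p : ℝ × ℝ × ℝ) : ℝ :=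
  (1 / 16) * (p.1 ^ 2 / D22 + p.2.2 ^ 2 / D11) ^ 2
      + (p.2.1 - p.1 * p.2.2 / 2) ^ 2 / (D11 * D22)

/-- `∂_θ Qf`. -/
noncomputable def Qth (D11 D22 : ℝ) (p : ℝ × ℝ × ℝ) : ℝ :=
  (p.1 ^ 2 / D22 + p.2.2 ^ 2 / D11) * p.2.2 / (4 * D11)
    - (p.2.1 - p.1 * p.2.2 / 2) * p.1 / (D11 * D22)

/-- `(∂_x + θ∂_y) Qf`. -/
noncomputable def Qhor (D11 D22 : ℝ) (p : ℝ × ℝ × ℝ) : ℝ :=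
  (p.1 ^ 2 / D22 + p.2.2 ^ 2 / D11) * p.1 / (4 * D22)
    + (p.2.1 - p.1 * p.2.2 / 2) * p.2.2 / (D11 * D22)

/-- Candidate for `∂_θ ufun`. -/
noncomputable def E1 (D11 D22 : ℝ) (p : ℝ × ℝ × ℝ) : ℝ :=
  Qth D11 D22 p * (-(1 : ℝ) / 2) * Qf D11 D22 p ^ (-(1 : ℝ) / 2 - 1)

/-- Candidate for `(∂_x + θ∂_y) ufun`. -/
noncomputable def E2 (D11 D22 : ℝ) (p : ℝ × ℝ × ℝ) : ℝ :=
  Qhor D11 D22 p * (-(1 : ℝ) / 2) * Qf D11 D22 p ^ (-(1 : ℝ) / 2 - 1)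

lemma ufun_eq (D11 D22 : ℝ) : ufun D11 D22 = fun p => Qf D11 D22 p ^ (-(1:ℝ)/2) := rfl

lemma Qf_contDiff (D11 D22 : ℝ) : ContDiff ℝ ∞ (Qf D11 D22) := by
  unfold Qf; simp only [div_eq_mul_inv]; fun_prop

lemma Qth_contDiff (D11 D22 : ℝ) : ContDiff ℝ ∞ (Qth D11 D22) := by
  unfold Qth; simp only [div_eq_mul_inv]; fun_prop

lemma Qhor_contDiff (D11 D22 : ℝ) : ContDiff ℝ ∞ (Qhor D11 D22) := by
  unfold Qhor; simp only [div_eq_mul_inv]; fun_prop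

lemma Qf_pos {D11 D22 : ℝ} (h11 : 0 < D11) (h22 : 0 < D22) {p : ℝ × ℝ × ℝ} (hp : p ≠ 0) :
    0 < Qf D11 D22 p := by
  obtain ⟨x, y, θ⟩ := p
  rcases eq_or_ne x 0 with hx | hx
  · rcases eq_or_ne θ 0 with hθ | hθ
    · have hy : y ≠ 0 := by
        intro h; exact hp (by simp [hx, hθ, h, Prod.ext_iff])
      subst hx; subst hθ
      have : y - (0:ℝ) * 0 / 2 ≠ 0 := by simpa using hy
      unfold Qf; positivity
    · unfold Qf; positivity
  · unfold Qf; positivity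

lemma fderiv_eq_deriv_line (f : ℝ × ℝ × ℝ → ℝ) (p v : ℝ × ℝ × ℝ)
    (hf : DifferentiableAt ℝ f p) :
    fderiv ℝ f p v = deriv (fun t : ℝ => f (p + t • v)) 0 := by
  have hline : HasDerivAt (fun t : ℝ => p + t • v) v 0 := by
    simpa using ((hasDerivAt_id (0 : ℝ)).smul_const v).const_add p
  have hcomp : HasDerivAt (fun t : ℝ => f (p + t • v)) (fderiv ℝ f p v) 0 := by
    exact
      HasFDerivAt.comp_hasDerivAt_of_eq (x := 0) hf.hasFDerivAt hline (by simp)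
  exact hcomp.deriv.symm

lemma hasDerivAt_coord (x v : ℝ) : HasDerivAt (fun t : ℝ => x + t * v) v 0 := by
  simpa using ((hasDerivAt_id (0 : ℝ)).mul_const v).const_add x

lemma hasDerivAt_A (D11 D22 x θ vx vθ : ℝ) :
    HasDerivAt (fun t : ℝ => (x + t * vx) ^ 2 / D22 + (θ + t * vθ) ^ 2 / D11)
      (2 * x * vx / D22 + 2 * θ * vθ / D11) 0 := by
  have h := (((hasDerivAt_coord x vx).pow 2).div_const D22).add
    (((hasDerivAt_coord θ vθ).pow 2).div_const D11)
  exact h.congr_deriv (by norm_num)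

lemma hasDerivAt_B (x y θ vx vy vθ : ℝ) :
    HasDerivAt (fun t : ℝ => (y + t * vy) - (x + t * vx) * (θ + t * vθ) / 2)
      (vy - (vx * θ + x * vθ) / 2) 0 := by
  have h := (hasDerivAt_coord y vy).sub
    (((hasDerivAt_coord x vx).mul (hasDerivAt_coord θ vθ)).div_const 2)
  exact h.congr_deriv (by norm_num)

lemma hasDerivAt_Qf_line (D11 D22 x y θ vx vy vθ : ℝ) :
    HasDerivAt (fun t : ℝ => Qf D11 D22 (x + t * vx, y + t * vy, θ + t * vθ))
      ((x ^ 2 / D22 + θ ^ 2 / D11) * (x * vx / D22 + θ * vθ / D11) / 4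
        + 2 * (y - x * θ / 2) * (vy - (vx * θ + x * vθ) / 2) / (D11 * D22)) 0 := by
  have h := (((hasDerivAt_A D11 D22 x θ vx vθ).pow 2).const_mul ((1:ℝ)/16)).add
    (((hasDerivAt_B x y θ vx vy vθ).pow 2).div_const (D11 * D22))
  have hfun : (fun t : ℝ => Qf D11 D22 (x + t * vx, y + t * vy, θ + t * vθ))
      = fun t : ℝ => (1/16) * ((x + t * vx) ^ 2 / D22 + (θ + t * vθ) ^ 2 / D11) ^ 2
          + ((y + t * vy) - (x + t * vx) * (θ + t * vθ) / 2) ^ 2 / (D11 * D22) := rfl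
  rw [hfun]
  exact h.congr_deriv (by push_cast; ring)

lemma hasDerivAt_Qth_line (D11 D22 x y θ vx vy vθ : ℝ) :
    HasDerivAt (fun t : ℝ => Qth D11 D22 (x + t * vx, y + t * vy, θ + t * vθ))
      (((2 * x * vx / D22 + 2 * θ * vθ / D11) * θ + (x ^ 2 / D22 + θ ^ 2 / D11) * vθ) / (4 * D11)
        - ((vy - (vx * θ + x * vθ) / 2) * x + (y - x * θ / 2) * vx) / (D11 * D22)) 0 := by
  have h := (((hasDerivAt_A D11 D22 x θ vx vθ).mul (hasDerivAt_coord θ vθ)).div_const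
      (4 * D11)).sub
    (((hasDerivAt_B x y θ vx vy vθ).mul (hasDerivAt_coord x vx)).div_const (D11 * D22))
  have hfun : (fun t : ℝ => Qth D11 D22 (x + t * vx, y + t * vy, θ + t * vθ))
      = fun t : ℝ => ((x + t * vx) ^ 2 / D22 + (θ + t * vθ) ^ 2 / D11) * (θ + t * vθ) / (4 * D11)
          - ((y + t * vy) - (x + t * vx) * (θ + t * vθ) / 2) * (x + t * vx) / (D11 * D22) := rfl
  rw [hfun]
  exact h.congr_deriv (by push_cast; ring)

lemma hasDerivAt_Qhor_line (D11 D22 x y θ vx vy vθ : ℝ) :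
    HasDerivAt (fun t : ℝ => Qhor D11 D22 (x + t * vx, y + t * vy, θ + t * vθ))
      (((2 * x * vx / D22 + 2 * θ * vθ / D11) * x + (x ^ 2 / D22 + θ ^ 2 / D11) * vx) / (4 * D22)
        + ((vy - (vx * θ + x * vθ) / 2) * θ + (y - x * θ / 2) * vθ) / (D11 * D22)) 0 := by
  have h := (((hasDerivAt_A D11 D22 x θ vx vθ).mul (hasDerivAt_coord x vx)).div_const
      (4 * D22)).add
    (((hasDerivAt_B x y θ vx vy vθ).mul (hasDerivAt_coord θ vθ)).div_const (D11 * D22))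
  have hfun : (fun t : ℝ => Qhor D11 D22 (x + t * vx, y + t * vy, θ + t * vθ))
      = fun t : ℝ => ((x + t * vx) ^ 2 / D22 + (θ + t * vθ) ^ 2 / D11) * (x + t * vx) / (4 * D22)
          + ((y + t * vy) - (x + t * vx) * (θ + t * vθ) / 2) * (θ + t * vθ) / (D11 * D22) := rfl
  rw [hfun]
  exact h.congr_deriv (by ring)

lemma ufun_contDiffAt {D11 D22 : ℝ} (h11 : 0 < D11) (h22 : 0 < D22)
    {p : ℝ × ℝ × ℝ} (hp : p ≠ 0) : ContDiffAt ℝ ∞ (ufun D11 D22) p := by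
  rw [ufun_eq]
  exact ((Qf_contDiff D11 D22).contDiffAt).rpow_const_of_ne (Qf_pos h11 h22 hp).ne'

lemma one_le_inf : (1 : WithTop ℕ∞) ≤ ∞ := by exact_mod_cast le_top

lemma ufun_diffAt {D11 D22 : ℝ} (h11 : 0 < D11) (h22 : 0 < D22)
    {p : ℝ × ℝ × ℝ} (hp : p ≠ 0) : DifferentiableAt ℝ (ufun D11 D22) p :=
  (ufun_contDiffAt h11 h22 hp).differentiableAt (by simp)

lemma dtheta_eq {D11 D22 : ℝ} (h11 : 0 < D11) (h22 : 0 < D22)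
    {q : ℝ × ℝ × ℝ} (hq : q ≠ 0) :
    Dtheta (ufun D11 D22) q = E1 D11 D22 q := by
  obtain ⟨x, y, θ⟩ := q
  have hQ0 : Qf D11 D22 (x + 0 * (0:ℝ), y + 0 * 0, θ + 0 * 1) ≠ 0 := by
    have := (Qf_pos h11 h22 hq).ne'
    convert this using 2 <;> norm_num
  unfold Dtheta
  rw [fderiv_eq_deriv_line _ _ _ (ufun_diffAt h11 h22 hq)]
  have hfun : (fun t : ℝ => ufun D11 D22 ((x, y, θ) + t • ((0:ℝ), (0:ℝ), (1:ℝ))))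
      = fun t : ℝ => Qf D11 D22 (x + t * 0, y + t * 0, θ + t * 1) ^ (-(1:ℝ)/2) := by
    funext t
    simp only [ufun_eq, Prod.smul_mk, Prod.mk_add_mk, smul_eq_mul]
  rw [hfun]
  have key := (hasDerivAt_Qf_line D11 D22 x y θ 0 0 1).rpow_const
    (p := -(1:ℝ)/2) (Or.inl hQ0)
  rw [key.deriv]
  have hpt : ((x + 0 * 0, y + 0 * 0, θ + 0 * 1) : ℝ × ℝ × ℝ) = (x, y, θ) := by norm_num
  rw [hpt]
  unfold E1 Qth
  ring

lemma dhor_eq {D11 D22 : ℝ} (h11 : 0 < D11) (h22 : 0 < D22)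
    {q : ℝ × ℝ × ℝ} (hq : q ≠ 0) :
    Dhor (ufun D11 D22) q = E2 D11 D22 q := by
  obtain ⟨x, y, θ⟩ := q
  have hQ0 : Qf D11 D22 (x + 0 * (1:ℝ), y + 0 * θ, θ + 0 * 0) ≠ 0 := by
    have := (Qf_pos h11 h22 hq).ne'
    convert this using 2 <;> norm_num
  unfold Dhor
  rw [fderiv_eq_deriv_line _ _ _ (ufun_diffAt h11 h22 hq)]
  have hfun : (fun t : ℝ => ufun D11 D22 ((x, y, θ) + t • ((1:ℝ), ((x, y, θ) : ℝ × ℝ × ℝ).2.2, (0:ℝ))))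
      = fun t : ℝ => Qf D11 D22 (x + t * 1, y + t * θ, θ + t * 0) ^ (-(1:ℝ)/2) := by
    funext t
    simp only [ufun_eq, Prod.smul_mk, Prod.mk_add_mk, smul_eq_mul]
  rw [hfun]
  have key := (hasDerivAt_Qf_line D11 D22 x y θ 1 θ 0).rpow_const
    (p := -(1:ℝ)/2) (Or.inl hQ0)
  rw [key.deriv]
  have hpt : ((x + 0 * 1, y + 0 * θ, θ + 0 * 0) : ℝ × ℝ × ℝ) = (x, y, θ) := by norm_num
  rw [hpt]
  unfold E2 Qhor
  ring

theorem stmt_11 (D11 D22 : ℝ) (h11 : 0 < D11) (h22 : 0 < D22) :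
    ContDiffOn ℝ ∞ (ufun D11 D22) {p : ℝ × ℝ × ℝ | p ≠ 0} ∧
    ∀ p : ℝ × ℝ × ℝ, p ≠ 0 →
      D11 * Dtheta (Dtheta (ufun D11 D22)) p + D22 * Dhor (Dhor (ufun D11 D22)) p = 0 := by
  constructor
  · exact fun p hp => (ufun_contDiffAt h11 h22 hp).contDiffWithinAt
  intro p hp
  have hopen : IsOpen {q : ℝ × ℝ × ℝ | q ≠ 0} := isOpen_compl_singleton
  obtain ⟨x, y, θ⟩ := p
  have hQne : Qf D11 D22 (x, y, θ) ≠ 0 := (Qf_pos h11 h22 hp).ne'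
  have hQ0a : Qf D11 D22 (x + 0 * (0:ℝ), y + 0 * 0, θ + 0 * 1) ≠ 0 := by
    convert hQne using 2 <;> norm_num
  have hQ0b : Qf D11 D22 (x + 0 * (1:ℝ), y + 0 * θ, θ + 0 * 0) ≠ 0 := by
    convert hQne using 2 <;> norm_num
  -- E1, E2 are differentiable at p
  have hE1diff : DifferentiableAt ℝ (E1 D11 D22) (x, y, θ) := by
    unfold E1
    exact (((Qth_contDiff D11 D22).differentiable (by simp) (x, y, θ)).mul_const _).mul
      (((Qf_contDiff D11 D22).differentiable (by simp) (x, y, θ)).rpow_const (Or.inl hQne))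
  have hE2diff : DifferentiableAt ℝ (E2 D11 D22) (x, y, θ) := by
    unfold E2
    exact (((Qhor_contDiff D11 D22).differentiable (by simp) (x, y, θ)).mul_const _).mul
      (((Qf_contDiff D11 D22).differentiable (by simp) (x, y, θ)).rpow_const (Or.inl hQne))
  -- second θ-derivative
  have hev1 : Dtheta (ufun D11 D22) =ᶠ[nhds ((x, y, θ) : ℝ × ℝ × ℝ)] E1 D11 D22 := by
    filter_upwards [hopen.mem_nhds hp] with q hq using dtheta_eq h11 h22 hq
  have hkey1 := ((hasDerivAt_Qth_line D11 D22 x y θ 0 0 1).mul_const (-(1:ℝ)/2)).mul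
    ((hasDerivAt_Qf_line D11 D22 x y θ 0 0 1).rpow_const (p := -(1:ℝ)/2 - 1) (Or.inl hQ0a))
  have hfun1 : (fun t : ℝ => E1 D11 D22 ((x, y, θ) + t • ((0:ℝ), (0:ℝ), (1:ℝ))))
      = fun t : ℝ => Qth D11 D22 (x + t * 0, y + t * 0, θ + t * 1) * (-(1:ℝ)/2)
          * Qf D11 D22 (x + t * 0, y + t * 0, θ + t * 1) ^ (-(1:ℝ)/2 - 1) := by
    funext t
    simp only [E1, Prod.smul_mk, Prod.mk_add_mk, smul_eq_mul]
  have h1 : Dtheta (Dtheta (ufun D11 D22)) (x, y, θ)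
      = (((2 * x * 0 / D22 + 2 * θ * 1 / D11) * θ + (x ^ 2 / D22 + θ ^ 2 / D11) * 1) / (4 * D11)
          - ((0 - (0 * θ + x * 1) / 2) * x + (y - x * θ / 2) * 0) / (D11 * D22)) * (-(1:ℝ)/2)
          * Qf D11 D22 (x + 0 * 0, y + 0 * 0, θ + 0 * 1) ^ (-(1:ℝ)/2 - 1)
        + Qth D11 D22 (x + 0 * 0, y + 0 * 0, θ + 0 * 1) * (-(1:ℝ)/2)
          * (((x ^ 2 / D22 + θ ^ 2 / D11) * (x * 0 / D22 + θ * 1 / D11) / 4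
              + 2 * (y - x * θ / 2) * (0 - (0 * θ + x * 1) / 2) / (D11 * D22)) * (-(1:ℝ)/2 - 1)
            * Qf D11 D22 (x + 0 * 0, y + 0 * 0, θ + 0 * 1) ^ (-(1:ℝ)/2 - 1 - 1)) := by
    show fderiv ℝ (Dtheta (ufun D11 D22)) (x, y, θ) (0, 0, 1) = _
    rw [hev1.fderiv_eq, fderiv_eq_deriv_line _ _ _ hE1diff, hfun1]
    exact hkey1.deriv
  -- second horizontal derivative
  have hev2 : Dhor (ufun D11 D22) =ᶠ[nhds ((x, y, θ) : ℝ × ℝ × ℝ)] E2 D11 D22 := by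
    filter_upwards [hopen.mem_nhds hp] with q hq using dhor_eq h11 h22 hq
  have hkey2 := ((hasDerivAt_Qhor_line D11 D22 x y θ 1 θ 0).mul_const (-(1:ℝ)/2)).mul
    ((hasDerivAt_Qf_line D11 D22 x y θ 1 θ 0).rpow_const (p := -(1:ℝ)/2 - 1) (Or.inl hQ0b))
  have hfun2 : (fun t : ℝ => E2 D11 D22 ((x, y, θ) + t • ((1:ℝ), ((x, y, θ) : ℝ × ℝ × ℝ).2.2, (0:ℝ))))
      = fun t : ℝ => Qhor D11 D22 (x + t * 1, y + t * θ, θ + t * 0) * (-(1:ℝ)/2)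
          * Qf D11 D22 (x + t * 1, y + t * θ, θ + t * 0) ^ (-(1:ℝ)/2 - 1) := by
    funext t
    simp only [E2, Prod.smul_mk, Prod.mk_add_mk, smul_eq_mul]
  have h2 : Dhor (Dhor (ufun D11 D22)) (x, y, θ)
      = (((2 * x * 1 / D22 + 2 * θ * 0 / D11) * x + (x ^ 2 / D22 + θ ^ 2 / D11) * 1) / (4 * D22)
          + ((θ - (1 * θ + x * 0) / 2) * θ + (y - x * θ / 2) * 0) / (D11 * D22)) * (-(1:ℝ)/2)
          * Qf D11 D22 (x + 0 * 1, y + 0 * θ, θ + 0 * 0) ^ (-(1:ℝ)/2 - 1)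
        + Qhor D11 D22 (x + 0 * 1, y + 0 * θ, θ + 0 * 0) * (-(1:ℝ)/2)
          * (((x ^ 2 / D22 + θ ^ 2 / D11) * (x * 1 / D22 + θ * 0 / D11) / 4
              + 2 * (y - x * θ / 2) * (θ - (1 * θ + x * 0) / 2) / (D11 * D22)) * (-(1:ℝ)/2 - 1)
            * Qf D11 D22 (x + 0 * 1, y + 0 * θ, θ + 0 * 0) ^ (-(1:ℝ)/2 - 1 - 1)) := by
    show fderiv ℝ (Dhor (ufun D11 D22)) (x, y, θ) (1, ((x, y, θ) : ℝ × ℝ × ℝ).2.2, 0) = _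
    rw [hev2.fderiv_eq, fderiv_eq_deriv_line _ _ _ hE2diff, hfun2]
    exact hkey2.deriv
  rw [h1, h2]
  have hpt1 : ((x + 0 * 0, y + 0 * 0, θ + 0 * 1) : ℝ × ℝ × ℝ) = (x, y, θ) := by norm_num
  have hpt2 : ((x + 0 * 1, y + 0 * θ, θ + 0 * 0) : ℝ × ℝ × ℝ) = (x, y, θ) := by norm_num
  rw [hpt1, hpt2]
  have hab : Qf D11 D22 (x, y, θ) ^ (-(1:ℝ)/2 - 1)
      = Qf D11 D22 (x, y, θ) ^ (-(1:ℝ)/2 - 1 - 1) * Qf D11 D22 (x, y, θ) := by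
    rw [← Real.rpow_add_one hQne]
    congr 1
    ring
  rw [hab]
  generalize Qf D11 D22 (x, y, θ) ^ (-(1:ℝ)/2 - 1 - 1) = b
  unfold Qf Qth Qhor
  field_simp
  ring
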